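/- Let G be a topological group, K a strongly neutral subgroup, and H a closed subgroup of G. Then the double coset space K\G/H with the quotient topology is a regular topological space. -/

import Mathlib

open scoped Pointwise Topology

/-- The quotient topology on the double coset space. -/
instance dosetQuotientTopology {G : Type*} [Group G] [TopologicalSpace G] (K H : Set G) :
    TopologicalSpace (DoubleCoset.Quotient K H) :=
  inferInstanceAs (TopologicalSpace (Quotient (DoubleCoset.setoid K H)))

private lemma mem_triple {G : Type*} [Group G] {A B C : Set G} {y : G} :
    y ∈ A * B * C ↔ ∃ a ∈ A, ∃ b ∈ B, ∃ c ∈ C, y = a * b * c := by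
  simp only [Set.mem_mul]
  constructor
  · rintro ⟨ab, ⟨a, ha, b, hb, rfl⟩, c, hc, rfl⟩
    exact ⟨a, ha, b, hb, c, hc, rfl⟩
  · rintro ⟨a, ha, b, hb, c, hc, rfl⟩
    exact ⟨a * b, ⟨a, ha, b, hb, rfl⟩, c, hc, rfl⟩

/-- if `K` is strongly neutral and `H` is closed, the double coset
space `K\G/H` is regular (T1 + separation of points from closed sets). -/
theorem stmt_4 {G : Type*} [Group G] [TopologicalSpace G] [IsTopologicalGroup G] [T2Space G]
    (K H : Subgroup G)
    (hK : ∀ O : Set G, IsOpen O → (K : Set G) ⊆ O →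
      ∃ V : Set G, IsOpen V ∧ (1 : G) ∈ V ∧ (K : Set G) * V ⊆ O)
    (hH : IsClosed (H : Set G)) :
    T1Space (DoubleCoset.Quotient (K : Set G) (H : Set G)) ∧
      RegularSpace (DoubleCoset.Quotient (K : Set G) (H : Set G)) := by
  classical
  let π : G → DoubleCoset.Quotient (K : Set G) (H : Set G) :=
    Quotient.mk (DoubleCoset.setoid (K : Set G) (H : Set G))
  have hqm : Topology.IsQuotientMap π := isQuotientMap_quotient_mk'
  have hrel : ∀ {a b : G}, π a = π b ↔ ∃ k ∈ K, ∃ h ∈ H, b = k * a * h := by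
    intro a b
    constructor
    · intro hab
      exact DoubleCoset.rel_iff.mp (Quotient.exact hab)
    · intro h
      exact Quotient.sound (DoubleCoset.rel_iff.mpr h)
  -- saturated sets
  have hsatlem : ∀ S : Set G, (∀ k ∈ K, ∀ y ∈ S, ∀ h ∈ H, k * y * h ∈ S) →
      π ⁻¹' (π '' S) = S := by
    intro S hS
    ext y
    simp only [Set.mem_preimage, Set.mem_image]
    constructor
    · rintro ⟨z, hz, hzy⟩
      obtain ⟨k, hk, h, hh, rfl⟩ := hrel.mp hzy
      exact hS k hk z hz h hh
    · intro hy
      exact ⟨y, hy, rfl⟩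
  have hT1 : T1Space (DoubleCoset.Quotient (K : Set G) (H : Set G)) := by
    refine ⟨fun q => ?_⟩
    obtain ⟨x, rfl⟩ := Quotient.exists_rep q
    show IsClosed ({π x} : Set _)
    rw [← hqm.isClosed_preimage]
    have hpre : π ⁻¹' {π x} = (K : Set G) * {x} * (H : Set G) := by
      ext y
      simp only [Set.mem_preimage, Set.mem_singleton_iff]
      constructor
      · intro hy
        obtain ⟨k, hk, h, hh, rfl⟩ := hrel.mp hy.symm
        exact mem_triple.mpr ⟨k, hk, x, rfl, h, hh, rfl⟩
      · intro hy
        obtain ⟨k, hk, x', hx', h, hh, rfl⟩ := mem_triple.mp hy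
        rw [Set.mem_singleton_iff] at hx'
        exact (hrel.mpr ⟨k, hk, h, hh, by rw [hx']⟩).symm
    rw [hpre]
    rw [← isOpen_compl_iff, isOpen_iff_mem_nhds]
    intro y hy
    have hyn : ∀ k ∈ K, ∀ h ∈ H, y ≠ k * x * h := by
      intro k hk h hh hEq
      exact hy (mem_triple.mpr ⟨k, hk, x, rfl, h, hh, hEq⟩)
    set C : Set G := (fun g : G => x⁻¹ * g * y) ⁻¹' (H : Set G) with hC
    have hCclosed : IsClosed C := hH.preimage (by fun_prop)
    have hKC : (K : Set G) ⊆ Cᶜ := by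
      intro k hk hkC
      have hh : x⁻¹ * k * y ∈ H := hkC
      refine hyn k⁻¹ (K.inv_mem hk) (x⁻¹ * k * y) hh ?_
      group
    obtain ⟨V, hVo, h1V, hKV⟩ := hK Cᶜ hCclosed.isOpen_compl hKC
    rw [mem_nhds_iff]
    refine ⟨V * {y}, ?_, hVo.mul_right, ?_⟩
    · intro z hz hzmem
      rw [Set.mul_singleton] at hz
      obtain ⟨v, hv, rfl⟩ := hz
      obtain ⟨k, hk, x', hx', h, hh, heq⟩ := mem_triple.mp hzmem
      rw [Set.mem_singleton_iff] at hx'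
      rw [hx'] at heq
      have heq' : v * y = k * x * h := heq
      have hmem : x⁻¹ * (k⁻¹ * v) * y = h := by
        rw [show x⁻¹ * (k⁻¹ * v) * y = x⁻¹ * (k⁻¹ * (v * y)) by group, heq']
        group
      have hCmem : k⁻¹ * v ∈ C := by
        show x⁻¹ * (k⁻¹ * v) * y ∈ (H : Set G)
        rw [hmem]; exact hh
      exact hKV (Set.mul_mem_mul (K.inv_mem hk) hv) hCmem
    · have := Set.mul_mem_mul h1V (Set.mem_singleton y)
      simpa using this
  have hreg : RegularSpace (DoubleCoset.Quotient (K : Set G) (H : Set G)) := by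
    rw [regularSpace_iff]
    intro s a hs ha
    obtain ⟨x, rfl⟩ := Quotient.exists_rep a
    set F : Set G := π ⁻¹' s with hFdef
    have hFclosed : IsClosed F := hs.preimage hqm.continuous
    have hxF : x ∉ F := ha
    have hFsat : ∀ k ∈ K, ∀ f ∈ F, ∀ h ∈ H, k * f * h ∈ F := by
      intro k hk f hf h hh
      have hpi : π (k * f * h) = π f :=
        (hrel.mpr ⟨k, hk, h, hh, rfl⟩).symm
      show π (k * f * h) ∈ s
      rw [hpi]; exact hf
    -- find M
    have hcont : Continuous fun p : G × G => p.1⁻¹ * x * p.2 := by fun_prop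
    have hto : (fun p : G × G => p.1⁻¹ * x * p.2) ⁻¹' Fᶜ ∈ 𝓝 ((1 : G), (1 : G)) := by
      refine hcont.continuousAt.preimage_mem_nhds (hFclosed.isOpen_compl.mem_nhds ?_)
      simpa using hxF
    rw [mem_nhds_prod_iff'] at hto
    obtain ⟨u, v, hu, h1u, hv, h1v, huv⟩ := hto
    set M : Set G := u ∩ v with hMdef
    have hMopen : IsOpen M := hu.inter hv
    have h1M : (1 : G) ∈ M := ⟨h1u, h1v⟩
    have hM : ∀ m ∈ M, ∀ m' ∈ M, m⁻¹ * x * m' ∉ F := by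
      intro m hm m' hm'
      exact huv (Set.mk_mem_prod hm.1 hm'.2)
    -- strong neutrality
    obtain ⟨V, hVo, h1V, hKV⟩ := hK (M * (K : Set G)) hMopen.mul_right
      (fun k hk => by simpa using Set.mul_mem_mul h1M hk)
    set SA : Set G := (K : Set G) * ({x} * M) * (H : Set G) with hSAdef
    set SB : Set G := (K : Set G) * (V * F) * (H : Set G) with hSBdef
    have hSAopen : IsOpen SA := (hMopen.mul_left.mul_left).mul_right
    have hSBopen : IsOpen SB := ((hVo.mul_right).mul_left).mul_right
    have hSAsat : π ⁻¹' (π '' SA) = SA := by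
      refine hsatlem SA ?_
      rintro k hk y hy h hh
      obtain ⟨k₁, hk₁, b, hb, h₁, hh₁, rfl⟩ := mem_triple.mp hy
      exact mem_triple.mpr ⟨k * k₁, K.mul_mem hk hk₁, b, hb, h₁ * h, H.mul_mem hh₁ hh, by group⟩
    have hSBsat : π ⁻¹' (π '' SB) = SB := by
      refine hsatlem SB ?_
      rintro k hk y hy h hh
      obtain ⟨k₁, hk₁, b, hb, h₁, hh₁, rfl⟩ := mem_triple.mp hy
      exact mem_triple.mpr ⟨k * k₁, K.mul_mem hk hk₁, b, hb, h₁ * h, H.mul_mem hh₁ hh, by group⟩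
    have hTAopen : IsOpen (π '' SA) := by
      rw [← hqm.isOpen_preimage, hSAsat]; exact hSAopen
    have hTBopen : IsOpen (π '' SB) := by
      rw [← hqm.isOpen_preimage, hSBsat]; exact hSBopen
    have haTA : π x ∈ π '' SA := by
      refine ⟨x, mem_triple.mpr ⟨1, K.one_mem, x * 1, ?_, 1, H.one_mem, by group⟩, rfl⟩
      exact Set.mul_mem_mul (Set.mem_singleton x) h1M
    have hsTB : s ⊆ π '' SB := by
      intro q hq
      obtain ⟨y, rfl⟩ := Quotient.exists_rep q
      have hyF : y ∈ F := hq
      refine ⟨y, mem_triple.mpr ⟨1, K.one_mem, 1 * y, ?_, 1, H.one_mem, by group⟩, rfl⟩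
      exact Set.mul_mem_mul h1V hyF
    refine Filter.disjoint_iff.mpr ⟨π '' SB, hTBopen.mem_nhdsSet.mpr hsTB,
      π '' SA, hTAopen.mem_nhds haTA, ?_⟩
    rw [Set.disjoint_left]
    rintro q ⟨bB, hbB, hqb⟩ ⟨aA, haA, hqa⟩
    have hpi : π aA = π bB := hqa.trans hqb.symm
    obtain ⟨k, hk, h, hh, hbEq⟩ := hrel.mp hpi
    obtain ⟨k₁, hk₁, b, hb, h₁, hh₁, haEq⟩ := mem_triple.mp haA
    rw [Set.mem_mul] at hb
    obtain ⟨x', hx', m, hm, rfl⟩ := hb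
    rw [Set.mem_singleton_iff] at hx'
    rw [hx'] at haEq
    obtain ⟨k₂, hk₂, c, hc, h₂, hh₂, hbEq2⟩ := mem_triple.mp hbB
    rw [Set.mem_mul] at hc
    obtain ⟨v', hv', f, hf, rfl⟩ := hc
    have heq2 : k₂ * (v' * f) * h₂ = k * (k₁ * (x * m) * h₁) * h := by
      rw [← hbEq2, hbEq, haEq]
    have hf2 : f = v'⁻¹ * k₂⁻¹ * (k * (k₁ * (x * m) * h₁) * h) * h₂⁻¹ := by
      rw [← heq2]; group
    have he : (k * k₁)⁻¹ * k₂ * v' ∈ (K : Set G) * V :=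
      Set.mul_mem_mul (K.mul_mem (K.inv_mem (K.mul_mem hk hk₁)) hk₂) hv'
    have hMK := hKV he
    rw [Set.mem_mul] at hMK
    obtain ⟨m', hm', k₃, hk₃, hmk⟩ := hMK
    have hv2 : v' = ((k * k₁)⁻¹ * k₂)⁻¹ * (m' * k₃) := by
      rw [hmk]; group
    have key : m'⁻¹ * x * m = k₃ * f * (h₂ * (h₁ * h)⁻¹) := by
      rw [hf2, hv2]; group
    have hFmem : k₃ * f * (h₂ * (h₁ * h)⁻¹) ∈ F :=
      hFsat k₃ hk₃ f hf (h₂ * (h₁ * h)⁻¹) (H.mul_mem hh₂ (H.inv_mem (H.mul_mem hh₁ hh)))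
    have : m'⁻¹ * x * m ∈ F := by rw [key]; exact hFmem
    exact hM m' hm' m hm this
  exact ⟨hT1, hreg⟩
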